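/- Let K ≥ 2 be an integer and let S_K = { exp(2πi k / K) : k = 0, 1, …, K−1 } be the set of K-th roots of unity. Let z be a nonzero complex number and suppose u ∈ S_K satisfies |arg(z · conj u)| < π/K. Then for every v ∈ S_K with v ≠ u, Re(conj(u) · z) > Re(conj(v) · z). (In other words, the complex-valued signum function csgn, which maps z to the unique K-th root of unity u with |arg(z · conj u)| < π/K, is a B-projection function with respect to the bilinear form B(p,q) = Re(conj(p) · q).) -/

import Mathlib

lemma aux_cos_mid (c x : ℝ) (hc : 0 < c) (hc2 : c ≤ Real.pi) (hx : c < x)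
    (hx2 : x < 2 * Real.pi - c) : Real.cos x < Real.cos c := by
  rcases le_or_gt x Real.pi with h | h
  · exact Real.cos_lt_cos_of_nonneg_of_le_pi hc.le h hx
  · rw [← Real.cos_two_pi_sub]
    exact Real.cos_lt_cos_of_nonneg_of_le_pi hc.le (by linarith) (by linarith)

lemma aux_cos (K : ℕ) (hK : 2 ≤ K) (θ : ℝ) (hθ : |θ| < Real.pi / K)
    (m : ℤ) (hm0 : m ≠ 0) (hm : m.natAbs < K) :
    Real.cos (θ + 2 * Real.pi * m / K) < Real.cos θ := by
  have hKpos : (0 : ℝ) < K := by positivity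
  have hπ := Real.pi_pos
  have hπK : 0 < Real.pi / K := by positivity
  have hK2 : (2 : ℝ) ≤ K := by exact_mod_cast hK
  have hπKle : Real.pi / K ≤ Real.pi := by
    rw [div_le_iff₀ hKpos]; nlinarith
  have hθ1 : -(Real.pi / K) < θ := neg_lt_of_abs_lt hθ
  have hθ2 : θ < Real.pi / K := lt_of_abs_lt hθ
  set m' : ℤ := if 0 < m then m else m + K with hm'def
  have h1 : 1 ≤ m' := by
    rcases lt_or_ge 0 m with h | h
    · simp only [hm'def, if_pos h]; omega
    · simp only [hm'def, if_neg (not_lt.mpr h)]; omega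
  have h2 : m' ≤ (K : ℤ) - 1 := by
    rcases lt_or_ge 0 m with h | h
    · simp only [hm'def, if_pos h]; omega
    · simp only [hm'def, if_neg (not_lt.mpr h)]; omega
  have hcoseq : Real.cos (θ + 2 * Real.pi * m / K) =
      Real.cos (θ + 2 * Real.pi * m' / K) := by
    rcases lt_or_ge 0 m with h | h
    · simp only [hm'def, if_pos h]
    · rw [hm'def, if_neg (not_lt.mpr h)]
      have heq : θ + 2 * Real.pi * (↑(m + (K:ℤ)) : ℝ) / K
          = (θ + 2 * Real.pi * m / K) + 2 * Real.pi := by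
        push_cast
        field_simp
        ring
      rw [heq, Real.cos_add_two_pi]
  rw [hcoseq]
  have hm'1 : (1 : ℝ) ≤ (m' : ℝ) := by exact_mod_cast h1
  have hm'2 : (m' : ℝ) ≤ (K : ℝ) - 1 := by
    have h3 : ((m' : ℝ)) ≤ (((K : ℤ) - 1 : ℤ) : ℝ) := by exact_mod_cast h2
    push_cast at h3
    linarith
  have hA : 2 * Real.pi / K ≤ 2 * Real.pi * (m' : ℝ) / K := by
    have he : 2 * Real.pi / (K:ℝ) = 2 * Real.pi * 1 / K := by ring
    rw [he]
    gcongr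
  have hB : 2 * Real.pi * (m' : ℝ) / K ≤ 2 * Real.pi - 2 * Real.pi / K := by
    have hB1 : 2 * Real.pi * (m' : ℝ) / K ≤ 2 * Real.pi * ((K : ℝ) - 1) / K := by
      gcongr
    have hB2 : 2 * Real.pi * ((K : ℝ) - 1) / K = 2 * Real.pi - 2 * Real.pi / K := by
      field_simp
    linarith
  have hlo : Real.pi / K < θ + 2 * Real.pi * (m' : ℝ) / K := by
    have : Real.pi / K + Real.pi / K = 2 * Real.pi / K := by ring
    linarith
  have hhi : θ + 2 * Real.pi * (m' : ℝ) / K < 2 * Real.pi - Real.pi / K := by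
    have : Real.pi / K + Real.pi / K = 2 * Real.pi / K := by ring
    linarith
  have step1 : Real.cos (θ + 2 * Real.pi * (m' : ℝ) / K) < Real.cos (Real.pi / K) :=
    aux_cos_mid _ _ hπK hπKle hlo hhi
  have step2 : Real.cos (Real.pi / K) < Real.cos θ := by
    rw [← Real.cos_abs θ]
    exact Real.cos_lt_cos_of_nonneg_of_le_pi (abs_nonneg θ) hπKle hθ
  linarith

theorem csgn_is_B_projection (K : ℕ) (hK : 2 ≤ K) (z u : ℂ) (hz : z ≠ 0)
    (hu : u ∈ {w : ℂ | ∃ k : ℕ, k < K ∧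
      w = Complex.exp (2 * Real.pi * Complex.I * k / K)})
    (harg : |(z * (starRingEnd ℂ) u).arg| < Real.pi / K) :
    ∀ v ∈ {w : ℂ | ∃ k : ℕ, k < K ∧
      w = Complex.exp (2 * Real.pi * Complex.I * k / K)}, v ≠ u →
      ((starRingEnd ℂ) v * z).re < ((starRingEnd ℂ) u * z).re := by
  obtain ⟨k, hk, huk⟩ := hu
  intro v hv hvu
  obtain ⟨l, hl, hvl⟩ := hv
  have hKpos : (0 : ℝ) < K := by positivity
  set a : ℝ := 2 * Real.pi * k / K with ha
  set b : ℝ := 2 * Real.pi * l / K with hb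
  have hu' : u = Complex.exp (↑a * Complex.I) := by
    rw [huk]; congr 1; rw [ha]; push_cast; ring
  have hv' : v = Complex.exp (↑b * Complex.I) := by
    rw [hvl]; congr 1; rw [hb]; push_cast; ring
  have hcu : (starRingEnd ℂ) u = Complex.exp ((-a : ℝ) * Complex.I) := by
    rw [hu', ← Complex.exp_conj]
    congr 1
    simp [Complex.conj_I]
  have hcv : (starRingEnd ℂ) v = Complex.exp ((-b : ℝ) * Complex.I) := by
    rw [hv', ← Complex.exp_conj]
    congr 1
    simp [Complex.conj_I]
  set θ : ℝ := (z * (starRingEnd ℂ) u).arg with hθdef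
  have habs : ‖z * (starRingEnd ℂ) u‖ = ‖z‖ := by
    rw [norm_mul, hcu, Complex.norm_exp_ofReal_mul_I, mul_one]
  have hw : z * (starRingEnd ℂ) u = ↑(‖z‖) * Complex.exp ((θ : ℂ) * Complex.I) := by
    conv_lhs => rw [← Complex.norm_mul_exp_arg_mul_I (z * (starRingEnd ℂ) u)]
    rw [habs]
  have hzeq : z = ↑(‖z‖) * Complex.exp (((θ + a : ℝ) : ℂ) * Complex.I) := by
    have h0 : z = z * (starRingEnd ℂ) u * Complex.exp ((a : ℝ) * Complex.I) := by
      rw [hcu, mul_assoc, ← Complex.exp_add]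
      have : ((-a : ℝ) : ℂ) * Complex.I + (a : ℝ) * Complex.I = 0 := by push_cast; ring
      rw [this, Complex.exp_zero, mul_one]
    have harg2 : (θ : ℂ) * Complex.I + (a : ℂ) * Complex.I
        = ((θ + a : ℝ) : ℂ) * Complex.I := by push_cast; ring
    conv_lhs => rw [h0, hw, mul_assoc, ← Complex.exp_add, harg2]
  have hre : ∀ (r x : ℝ), ((r : ℂ) * Complex.exp ((x : ℂ) * Complex.I)).re = r * Real.cos x := by
    intro r x
    rw [Complex.re_ofReal_mul, Complex.exp_ofReal_mul_I_re]
  have hvre : ((starRingEnd ℂ) v * z).re = ‖z‖ * Real.cos (θ + a - b) := by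
    have harg3 : ((θ + a : ℝ) : ℂ) * Complex.I + ((-b : ℝ) : ℂ) * Complex.I
        = ((θ + a - b : ℝ) : ℂ) * Complex.I := by push_cast; ring
    have hvz : (starRingEnd ℂ) v * z
        = ↑(‖z‖) * Complex.exp (((θ + a - b : ℝ) : ℂ) * Complex.I) := by
      rw [hcv]
      conv_lhs => rw [hzeq]
      rw [mul_comm, mul_assoc, ← Complex.exp_add, harg3]
    rw [hvz, hre]
  have hure : ((starRingEnd ℂ) u * z).re = ‖z‖ * Real.cos θ := by
    rw [mul_comm, hw, hre]
  rw [hvre, hure]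
  have hzpos : 0 < ‖z‖ := by
    simpa using norm_pos_iff.mpr hz
  apply mul_lt_mul_of_pos_left ?_ hzpos
  have hkl : k ≠ l := by
    intro h
    exact hvu (by rw [hvl, huk, h])
  set m : ℤ := (k : ℤ) - l with hm
  have hab : θ + a - b = θ + 2 * Real.pi * (m : ℝ) / K := by
    rw [ha, hb, hm]; push_cast; ring
  rw [hab]
  exact aux_cos K hK θ harg m (by omega) (by omega)
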